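/- (Bound for the bad-modulus factor S⁽²⁾.) Assume gcd(λ₀,…,λ_n, L) = 1. With D := det(2M_F), let q = q₁q₂ where gcd(q₁, 2LD) = 1 and every prime factor of q₂ divides 2LD. Then there is a constant C depending only on F such that, uniformly for all q, c ∈ ℤ^{n+1}, L and λ: |S⁽²⁾_{q,L,λ}(c)| ≤ C·q₂^{(n+3)/2}·Lⁿ·gcd(q₂, L)^{1/2}. -/

import Mathlib

open scoped BigOperators
open Finset Filter Topology Matrix

noncomputable section

namespace Quad

/-- The integral quadratic form `x ↦ xᵀ M_F x` where `N = 2·M_F` is an integer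
symmetric matrix with even diagonal, so that the value `(xᵀ N x)/2` is an integer. -/
def Fint {m : ℕ} (N : Matrix (Fin m) (Fin m) ℤ) (x : Fin m → ℤ) : ℤ :=
  (∑ i, ∑ j, N i j * x i * x j) / 2

/-- The corresponding real quadratic form `x ↦ xᵀ M_F x`, `N = 2·M_F`. -/
def FR {m : ℕ} (N : Matrix (Fin m) (Fin m) ℤ) (x : Fin m → ℝ) : ℝ :=
  (∑ i, ∑ j, (N i j : ℝ) * x i * x j) / 2

/-- The real quadratic form attached to a real matrix. -/
def QFR {m : ℕ} (A : Matrix (Fin m) (Fin m) ℝ) (x : Fin m → ℝ) : ℝ :=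
  ∑ i, ∑ j, A i j * x i * x j

/-- The gradient `∇F(x) = 2 M_F x = N x`. -/
def grad {m : ℕ} (N : Matrix (Fin m) (Fin m) ℤ) (x : Fin m → ℤ) : Fin m → ℤ :=
  fun i => ∑ j, N i j * x j

/-- `H_{λ,L}(y) = F(λ)/L + ∇F(λ)·y` (assuming `L ∣ F(λ)`). -/
def Hpoly {m : ℕ} (N : Matrix (Fin m) (Fin m) ℤ) (L : ℕ) (lam y : Fin m → ℤ) : ℤ :=
  Fint N lam / (L : ℤ) + ∑ i, grad N lam i * y i

/-- The additive character `e_q(t) = exp(2πit/q)`. -/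
def eChar (q : ℕ) (t : ℝ) : ℂ := Complex.exp (2 * Real.pi * Complex.I * (t : ℂ) / (q : ℂ))

/-- The dual form value `N_F(c) = cᵀ · adj(N) · c`, `N = 2 M_F`; this equals `2ⁿ F*(c)`. -/
def dualF {m : ℕ} (N : Matrix (Fin m) (Fin m) ℤ) (c : Fin m → ℤ) : ℤ :=
  ∑ i, ∑ j, N.adjugate i j * c i * c j

/-- The embedding sending the `i`-th of the `n-1` variables of `F₂` to coordinate `i+2`. -/
def emb {n : ℕ} (i : Fin (n-1)) : Fin (n+1) := ⟨i.val + 2, by have h := i.isLt; omega⟩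

/-- The quadratic Gauss sum `ι_q = Σ_{x mod q} e_q(x²)`. -/
def iotaSum (q : ℕ) : ℂ := ∑ x ∈ Finset.range q, eChar q ((x : ℝ)^2)

open Classical in
/-- The exponential sum `S_{q,L,λ}(c)`. -/
def Sq (n : ℕ) (N : Matrix (Fin (n+1)) (Fin (n+1)) ℤ) (q L : ℕ)
    (lam c : Fin (n+1) → ℤ) : ℂ :=
  ∑ a ∈ (Finset.range q).filter (fun a => Nat.gcd a q = 1),
    ∑ σ ∈ (Finset.univ : Finset (Fin (n+1) → Fin (q*L))).filter
        (fun σ => (L : ℤ) ∣ Hpoly N L lam (fun i => ((σ i : ℕ) : ℤ))),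
      eChar (q*L)
        (((a : ℤ) * (Hpoly N L lam (fun i => ((σ i : ℕ) : ℤ))
            + (L : ℤ) * Fint N (fun i => ((σ i : ℕ) : ℤ)))
          + ∑ i, c i * ((σ i : ℕ) : ℤ) : ℤ) : ℝ)

/-- The good-modulus factor `S⁽¹⁾_{q,L,λ}(c)` (for `q = q₁q₂`, `gcd(q₁,2LD) = 1`). -/
def S1 (n : ℕ) (N : Matrix (Fin (n+1)) (Fin (n+1)) ℤ) (q₁ q₂ L : ℕ) (k₁ : ℤ)
    (lam c : Fin (n+1) → ℤ) : ℂ :=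
  ∑ σ : Fin (n+1) → Fin q₁,
    ∑ a ∈ (Finset.range q₁).filter (fun a => Nat.gcd a q₁ = 1),
      eChar q₁
        (((a : ℤ) * (((q₂ : ℤ) * (L : ℤ))^2 * Fint N (fun i => ((σ i : ℕ) : ℤ))
              + (q₂ : ℤ) * ((∑ i, grad N lam i * ((σ i : ℕ) : ℤ)) + k₁))
          + ∑ i, c i * ((σ i : ℕ) : ℤ) : ℤ) : ℝ)

open Classical in
/-- The bad-modulus factor `S⁽²⁾_{q,L,λ}(c)`. -/
def S2 (n : ℕ) (N : Matrix (Fin (n+1)) (Fin (n+1)) ℤ) (q₁ q₂ L : ℕ) (k₂ : ℤ)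
    (lam c : Fin (n+1) → ℤ) : ℂ :=
  ∑ σ ∈ (Finset.univ : Finset (Fin (n+1) → Fin (q₂*L))).filter
      (fun σ => (L : ℤ) ∣ Hpoly N L lam (fun i => (q₁ : ℤ) * ((σ i : ℕ) : ℤ))),
    ∑ a ∈ (Finset.range q₂).filter (fun a => Nat.gcd a q₂ = 1),
      eChar (q₂*L)
        (((a : ℤ) * ((q₁ : ℤ)^2 * (L : ℤ) * Fint N (fun i => ((σ i : ℕ) : ℤ))
              + (q₁ : ℤ) * ((∑ i, grad N lam i * ((σ i : ℕ) : ℤ)) + k₂))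
          + ∑ i, c i * ((σ i : ℕ) : ℤ) : ℤ) : ℝ)

/-- The complete quadratic exponential sum `T_q(G,m;c)`. -/
def Tq (n : ℕ) (NG : Matrix (Fin (n+1)) (Fin (n+1)) ℤ) (q : ℕ) (m : ℤ)
    (c : Fin (n+1) → ℤ) : ℂ :=
  ∑ a ∈ (Finset.range q).filter (fun a => Nat.gcd a q = 1),
    ∑ b : Fin (n+1) → Fin q,
      eChar q (((a : ℤ) * (Fint NG (fun i => ((b i : ℕ) : ℤ)) - m)
        + ∑ i, c i * ((b i : ℕ) : ℤ) : ℤ) : ℝ)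

/-- The counting function whose normalised limit is the local density
`σ_p(W;L,λ)`: the number of `v ∈ (ℤ/p^kℤ)^{n+1}` with `F(v) ≡ 0 mod p^k` and
`v ≡ λ mod p^{ord_p L}`. -/
def localCount (n : ℕ) (N : Matrix (Fin (n+1)) (Fin (n+1)) ℤ) (L : ℕ)
    (lam : Fin (n+1) → ℤ) (p k : ℕ) : ℕ :=
  Nat.card {v : Fin (n+1) → Fin (p^k) //
    ((p : ℤ)^k ∣ Fint N (fun i => ((v i : ℕ) : ℤ))) ∧
    ∀ i, (p : ℤ)^(padicValNat p L) ∣ ((v i : ℕ) : ℤ) - lam i}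

/-- The coordinates `t(x) = Mx` of an integer vector. -/
def tmap (n : ℕ) (M : Matrix (Fin (n+1)) (Fin (n+1)) ℝ) (x : Fin (n+1) → ℤ) :
    Fin (n+1) → ℝ :=
  M.mulVec (fun i => (x i : ℝ))

/-- The counting function `N_W((R,ξ),(L,Γ);B)` for the affine cone. -/
def NW (n : ℕ) (N : Matrix (Fin (n+1)) (Fin (n+1)) ℤ)
    (M : Matrix (Fin (n+1)) (Fin (n+1)) ℝ) (a b : Fin (n+1) → ℝ)
    (B R : ℝ) (L : ℕ) (Γ : Fin (n+1) → ℤ) : ℕ :=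
  Nat.card {x : Fin (n+1) → ℤ //
    x ≠ 0 ∧ Fint N x = 0 ∧ (∀ i, (L : ℤ) ∣ x i - Γ i) ∧
    tmap n M x 0 ≠ 0 ∧
    (∀ j : Fin (n+1), 2 ≤ j.val →
      a j ≤ R * (tmap n M x j / tmap n M x 0) ∧ R * (tmap n M x j / tmap n M x 0) ≤ b j) ∧
    (∀ i, |tmap n M x i| ≤ B)}

/-- Twice the counting function `N_V((R,ξ),(L,Λ);B)` for the projective quadric:
the number of primitive integer vectors on the cone, in the real zoom region,
of height at most `B`, congruent mod `L` to a unit multiple of `Γ`. -/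
def NV (n : ℕ) (N : Matrix (Fin (n+1)) (Fin (n+1)) ℤ)
    (M : Matrix (Fin (n+1)) (Fin (n+1)) ℝ) (a b : Fin (n+1) → ℝ)
    (B R : ℝ) (L : ℕ) (Γ : Fin (n+1) → ℤ) : ℕ :=
  Nat.card {x : Fin (n+1) → ℤ //
    Finset.univ.gcd x = 1 ∧ Fint N x = 0 ∧
    tmap n M x 0 ≠ 0 ∧
    (∀ j : Fin (n+1), 2 ≤ j.val →
      a j ≤ R * (tmap n M x j / tmap n M x 0) ∧ R * (tmap n M x j / tmap n M x 0) ≤ b j) ∧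
    (∀ i, |tmap n M x i| ≤ B) ∧
    (∃ γ : (ZMod L)ˣ, ∀ i, ((x i : ZMod L)) = (γ : ZMod L) * ((Γ i : ZMod L)))}

/-- The value of the singular integral `I_R` for `R ≥ R₀`. -/
def IRval (n : ℕ) (M : Matrix (Fin (n+1)) (Fin (n+1)) ℝ) (a b : Fin (n+1) → ℝ)
    (R : ℝ) : ℝ :=
  2 * (∏ j ∈ Finset.univ.filter (fun j : Fin (n+1) => 2 ≤ j.val), (b j - a j))
    / (((n : ℝ) - 1) * |M.det| * R^(n-1))

/-- The error exponent factor `E_τ(B)`. -/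
def Etau (n : ℕ) (τ B : ℝ) : ℝ :=
  if 5 ≤ n then B ^ (-(((n : ℝ) - 3) * τ / (5 * (n : ℝ) - 7)))
  else B ^ (-(2 * τ / 17))

/-- The error factor `E_τ(1;B)` from the upper-bound range `-1 < τ < 1`. -/
def Etau1 (n : ℕ) (τ B : ℝ) : ℝ :=
  if 5 ≤ n then B ^ (-(((n : ℝ) - 3) * τ / 2))
  else B ^ (-τ) + B ^ (-((1 + τ)/4))

end Quad

namespace Quad




def eZ (M : ℕ) (t : ℤ) : ℂ := eChar M (t : ℝ)

lemma eZ_add (M : ℕ) (s t : ℤ) : eZ M (s + t) = eZ M s * eZ M t := by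
  unfold eZ eChar
  rw [← Complex.exp_add]
  congr 1
  push_cast
  ring

lemma eZ_zero (M : ℕ) : eZ M 0 = 1 := by
  unfold eZ eChar; simp

lemma eZ_mul_M (M : ℕ) (hM : M ≠ 0) (k : ℤ) : eZ M ((M:ℤ) * k) = 1 := by
  unfold eZ eChar
  have hM' : (M:ℂ) ≠ 0 := Nat.cast_ne_zero.mpr hM
  have : 2 * (Real.pi:ℂ) * Complex.I * ((((M:ℤ) * k : ℤ):ℝ):ℂ) / (M:ℂ)
      = (k:ℂ) * (2 * (Real.pi:ℂ) * Complex.I) := by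
    field_simp
    push_cast
    ring
  rw [this, Complex.exp_int_mul_two_pi_mul_I]

lemma eZ_sub_dvd (M : ℕ) (hM : M ≠ 0) {s t : ℤ} (h : (M:ℤ) ∣ s - t) :
    eZ M s = eZ M t := by
  obtain ⟨k, hk⟩ := h
  have : s = t + (M:ℤ) * k := by linarith
  rw [this, eZ_add, eZ_mul_M M hM, mul_one]

lemma eZ_conj (M : ℕ) (t : ℤ) : (starRingEnd ℂ) (eZ M t) = eZ M (-t) := by
  unfold eZ eChar
  rw [← Complex.exp_conj]
  congr 1
  simp only [_root_.map_div₀, _root_.map_mul, Complex.conj_I, Complex.conj_ofNat,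
    Complex.conj_ofReal, _root_.map_natCast]
  push_cast
  ring

lemma abs_eZ (M : ℕ) (t : ℤ) : ‖eZ M t‖ = 1 := by
  unfold eZ eChar
  rw [show 2 * (Real.pi:ℂ) * Complex.I * (((t:ℤ):ℝ):ℂ) / (M:ℂ)
      = ((2 * Real.pi * ((t:ℤ):ℝ) / (M:ℝ) : ℝ) : ℂ) * Complex.I by push_cast; ring]
  exact Complex.norm_exp_ofReal_mul_I _

lemma eZ_sum (M : ℕ) {ι : Type*} (s : Finset ι) (f : ι → ℤ) :
    eZ M (∑ i ∈ s, f i) = ∏ i ∈ s, eZ M (f i) := by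
  classical
  induction s using Finset.cons_induction with
  | empty => simp [eZ_zero]
  | cons a s ha ih => rw [Finset.sum_cons, Finset.prod_cons, eZ_add, ih]

lemma eZ_mul_nat (M : ℕ) (u : ℤ) (v : ℕ) : eZ M (u * v) = (eZ M u) ^ v := by
  induction v with
  | zero => simp [eZ_zero]
  | succ m ih =>
    have : u * ((m : ℤ) + 1) = u * m + u := by ring
    rw [show ((m + 1 : ℕ) : ℤ) = (m : ℤ) + 1 by push_cast; ring, this, eZ_add, ih, pow_succ]

lemma eZ_ortho (r : ℕ) (hr : 0 < r) (u : ℤ) :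
    ∑ v ∈ Finset.range r, eZ r (u * v) = if (r:ℤ) ∣ u then (r:ℂ) else 0 := by
  by_cases h : (r:ℤ) ∣ u
  · rw [if_pos h]
    obtain ⟨k, rfl⟩ := h
    have : ∀ v ∈ Finset.range r, eZ r ((r:ℤ) * k * v) = 1 := by
      intro v _
      rw [show (r:ℤ) * k * v = (r:ℤ) * (k * v) by ring, eZ_mul_M r hr.ne']
    rw [Finset.sum_congr rfl this]
    simp
  · rw [if_neg h]
    have hz : eZ r u ≠ 1 := by
      intro he
      unfold eZ eChar at he
      rw [Complex.exp_eq_one_iff] at he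
      obtain ⟨m, hm⟩ := he
      have hr' : (r:ℂ) ≠ 0 := Nat.cast_ne_zero.mpr hr.ne'
      have hπ : (Real.pi:ℂ) ≠ 0 := Complex.ofReal_ne_zero.mpr Real.pi_ne_zero
      have hI : Complex.I ≠ 0 := Complex.I_ne_zero
      rw [div_eq_iff hr'] at hm
      push_cast at hm
      have h2πI : (2 * (Real.pi:ℂ) * Complex.I) ≠ 0 := by
        intro h0
        simp only [mul_eq_zero] at h0
        rcases h0 with (h0 | h0)
        · rcases h0 with (h0 | h0)
          · norm_num at h0
          · exact hπ h0
        · exact hI h0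
      have hcast : ((u:ℤ):ℂ) = (m:ℂ) * r := by
        apply mul_left_cancel₀ h2πI
        push_cast
        linear_combination hm
      have : (u:ℤ) = m * r := by exact_mod_cast hcast
      exact h ⟨m, by linarith⟩
    have hgeom : ∀ v ∈ Finset.range r, eZ r (u * v) = (eZ r u)^v := by
      intro v _; exact eZ_mul_nat r u v
    rw [Finset.sum_congr rfl hgeom, geom_sum_eq hz]
    have : (eZ r u) ^ r = 1 := by
      rw [← eZ_mul_nat]
      have : (r:ℤ) ∣ u * r - 0 := by
        rw [sub_zero]; exact dvd_mul_left _ _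
      rw [eZ_sub_dvd r hr.ne' this, eZ_zero]
    rw [this, sub_self, zero_div]

lemma eZ_scale (r s : ℕ) (hr : r ≠ 0) (hs : s ≠ 0) (t : ℤ) :
    eZ (r * s) ((s:ℤ) * t) = eZ r t := by
  unfold eZ eChar
  congr 1
  have hr' : (r:ℂ) ≠ 0 := Nat.cast_ne_zero.mpr hr
  have hs' : (s:ℂ) ≠ 0 := Nat.cast_ne_zero.mpr hs
  push_cast
  field_simp



def Bf {m : ℕ} (N : Matrix (Fin m) (Fin m) ℤ) (x y : Fin m → ℤ) : ℤ :=
  ∑ i, ∑ j, N i j * x i * y j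

lemma Bf_symm {m : ℕ} {N : Matrix (Fin m) (Fin m) ℤ} (hN : N.IsSymm)
    (x y : Fin m → ℤ) : Bf N x y = Bf N y x := by
  unfold Bf
  rw [Finset.sum_comm]
  refine Finset.sum_congr rfl fun j _ => Finset.sum_congr rfl fun i _ => ?_
  rw [hN.apply j i]
  ring

lemma even_Bf_self {m : ℕ} {N : Matrix (Fin m) (Fin m) ℤ} (hN : N.IsSymm)
    (hEv : ∀ i, Even (N i i)) (x : Fin m → ℤ) : Even (Bf N x x) := by
  have h2 : ((Bf N x x : ℤ) : ZMod 2) = 0 := by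
    unfold Bf
    push_cast
    rw [← Finset.sum_product']
    refine Finset.sum_involution (fun p _ => (p.2, p.1)) ?_ ?_ (fun p hp => Finset.mem_univ _)
      (fun p hp => rfl)
    · intro p hp
      have hsym : ((N p.2 p.1 : ℤ) : ZMod 2) = ((N p.1 p.2 : ℤ) : ZMod 2) := by
        rw [hN.apply p.2 p.1]
      have : ((N p.2 p.1 : ℤ) : ZMod 2) * (x p.2 : ZMod 2) * (x p.1 : ZMod 2)
          = ((N p.1 p.2 : ℤ) : ZMod 2) * (x p.1 : ZMod 2) * (x p.2 : ZMod 2) := by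
        rw [hsym]; ring
      rw [this, ← two_mul, show (2 : ZMod 2) = 0 by decide, zero_mul]
    · intro p hp hne hcontra
      have hdiag : p.2 = p.1 := congrArg Prod.fst hcontra
      apply hne
      obtain ⟨k, hk⟩ := hEv p.1
      rw [hdiag, hk]
      push_cast
      rw [CharTwo.add_self_eq_zero, zero_mul, zero_mul]
  have h3 : (2:ℤ) ∣ Bf N x x := (ZMod.intCast_zmod_eq_zero_iff_dvd _ 2).mp h2
  obtain ⟨k, hk⟩ := h3
  exact ⟨k, by linarith⟩


lemma two_mul_Fint {m : ℕ} {N : Matrix (Fin m) (Fin m) ℤ} (hN : N.IsSymm)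
    (hEv : ∀ i, Even (N i i)) (x : Fin m → ℤ) : 2 * Fint N x = Bf N x x := by
  have h := even_Bf_self hN hEv x
  obtain ⟨k, hk⟩ := h
  unfold Fint
  have : (∑ i, ∑ j, N i j * x i * x j) = Bf N x x := rfl
  rw [this, hk, show k + k = 2 * k by ring]
  omega

lemma Bf_expand {m : ℕ} {N : Matrix (Fin m) (Fin m) ℤ} (hN : N.IsSymm)
    (x y : Fin m → ℤ) (k : ℤ) :
    Bf N (fun i => x i + k * y i) (fun i => x i + k * y i)
      = Bf N x x + 2 * k * Bf N x y + k ^ 2 * Bf N y y := by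
  have hexp : ∀ i j : Fin m, N i j * (x i + k * y i) * (x j + k * y j)
      = N i j * x i * x j + k * (N i j * x i * y j)
        + k * (N i j * y i * x j) + k ^ 2 * (N i j * y i * y j) := by
    intro i j; ring
  unfold Bf
  simp only [hexp, Finset.sum_add_distrib, ← Finset.mul_sum]
  have hyx : (∑ i, ∑ j, N i j * y i * x j) = ∑ i, ∑ j, N i j * x i * y j := by
    have := Bf_symm hN y x
    unfold Bf at this
    exact this
  rw [hyx]
  ring

lemma Fint_expand {m : ℕ} {N : Matrix (Fin m) (Fin m) ℤ} (hN : N.IsSymm)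
    (hEv : ∀ i, Even (N i i)) (x y : Fin m → ℤ) (k : ℤ) :
    Fint N (fun i => x i + k * y i) = Fint N x + k * Bf N x y + k ^ 2 * Fint N y := by
  have h2 : 2 * Fint N (fun i => x i + k * y i)
      = 2 * (Fint N x + k * Bf N x y + k ^ 2 * Fint N y) := by
    rw [two_mul_Fint hN hEv, Bf_expand hN x y k]
    have hx := two_mul_Fint hN hEv x
    have hy := two_mul_Fint hN hEv y
    ring_nf
    ring_nf at hx hy
    rw [← hx, ← hy]
    ring
  exact mul_left_cancel₀ two_ne_zero h2

lemma Bf_eq_mulVec {m : ℕ} (N : Matrix (Fin m) (Fin m) ℤ) (x y : Fin m → ℤ) :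
    Bf N x y = ∑ i, x i * N.mulVec y i := by
  unfold Bf Matrix.mulVec dotProduct
  refine Finset.sum_congr rfl fun i _ => ?_
  rw [Finset.mul_sum]
  refine Finset.sum_congr rfl fun j _ => ?_
  ring

lemma dvd_det_mul {m : ℕ} (N : Matrix (Fin m) (Fin m) ℤ) (h : Fin m → ℤ) (q : ℤ)
    (hall : ∀ i, q ∣ N.mulVec h i) (j : Fin m) : q ∣ N.det * h j := by
  have hid : N.adjugate.mulVec (N.mulVec h) = N.det • h := by
    rw [Matrix.mulVec_mulVec, Matrix.adjugate_mul, Matrix.smul_mulVec, Matrix.one_mulVec]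
  have hj : N.det * h j = ∑ i, N.adjugate j i * N.mulVec h i := by
    have := congrFun hid j
    unfold Matrix.mulVec dotProduct at this
    simpa [eq_comm, Matrix.mulVec, dotProduct] using this
  rw [hj]
  exact Finset.dvd_sum fun i _ => Dvd.dvd.mul_left (hall i) _

lemma dvd_mul_finset_gcd {ι : Type*} (s : Finset ι) (f : ι → ℤ) (A d : ℤ)
    (h : ∀ j ∈ s, d ∣ A * f j) : d ∣ A * s.gcd f := by
  classical
  induction s using Finset.induction_on with
  | empty => simp
  | insert a s ha ih =>
    rw [Finset.gcd_insert]
    have h1 : d ∣ A * f a := h a (Finset.mem_insert_self _ _)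
    have h2 : d ∣ A * s.gcd f := ih fun j hj => h j (Finset.mem_insert_of_mem hj)
    have h3 : d ∣ gcd (A * f a) (A * s.gcd f) := dvd_gcd h1 h2
    rw [_root_.gcd_mul_left] at h3
    exact (((normalize_associated A).mul_right (gcd (f a) (s.gcd f))).dvd_iff_dvd_right).mp h3

lemma count_dvd_mul (q d : ℕ) (hq : 0 < q) (hd : 0 < d) :
    ((Finset.range q).filter (fun v : ℕ => (q:ℤ) ∣ (d:ℤ) * (v:ℤ))).card ≤ d := by
  classical
  set g := Nat.gcd q d with hg
  have hgpos : 0 < g := Nat.gcd_pos_of_pos_left _ hq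
  set m := q / g with hm
  have hmq : m * g = q := Nat.div_mul_cancel (Nat.gcd_dvd_left q d)
  have hmpos : 0 < m := by
    rcases Nat.eq_zero_or_pos m with h0 | h0
    · rw [h0, zero_mul] at hmq; omega
    · exact h0
  have hkey : ∀ v ∈ (Finset.range q).filter (fun v : ℕ => (q:ℤ) ∣ (d:ℤ) * (v:ℤ)), m ∣ v := by
    intro v hv
    rw [Finset.mem_filter] at hv
    have hdvd : q ∣ d * v := by
      have := hv.2
      rw [show (d:ℤ) * (v:ℕ) = ((d * v : ℕ) : ℤ) by push_cast; ring] at this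
      exact_mod_cast this
    have hco : Nat.Coprime (q / g) (d / g) := Nat.coprime_div_gcd_div_gcd hgpos
    have hdd : (q / g) ∣ (d / g) * v := by
      obtain ⟨k, hk⟩ := hdvd
      refine ⟨k, ?_⟩
      have heq2 : (d / g) * v * g = (q / g) * k * g := by
        rw [mul_right_comm, Nat.div_mul_cancel (Nat.gcd_dvd_right q d), mul_right_comm,
          Nat.div_mul_cancel (Nat.gcd_dvd_left q d), ← hk, mul_comm]
      exact Nat.eq_of_mul_eq_mul_right hgpos heq2
    exact (Nat.Coprime.dvd_of_dvd_mul_left hco hdd)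
  calc ((Finset.range q).filter (fun v : ℕ => (q:ℤ) ∣ (d:ℤ) * (v:ℤ))).card
      ≤ (Finset.range g).card := by
        refine Finset.card_le_card_of_injOn (fun v => v / m) ?_ ?_
        · intro v hv
          rw [Finset.mem_coe, Finset.mem_range]
          have hvq : v < q := Finset.mem_range.mp (Finset.mem_filter.mp hv).1
          rw [Nat.div_lt_iff_lt_mul hmpos]
          have hgm : g * m = q := by rw [mul_comm]; exact hmq
          omega
        · intro v hv v' hv' heq
          have h1 := Nat.div_mul_cancel (hkey v hv)
          have h2 := Nat.div_mul_cancel (hkey v' hv')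
          rw [← h1, ← h2]
          exact congrArg (· * m) heq
    _ = g := Finset.card_range g
    _ ≤ d := Nat.le_of_dvd hd (Nat.gcd_dvd_right q d)


lemma Fint_add {m : ℕ} {N : Matrix (Fin m) (Fin m) ℤ} (hN : N.IsSymm)
    (hEv : ∀ i, Even (N i i)) (u v : Fin m → ℤ) :
    Fint N (fun i => u i + v i) = Fint N u + Bf N u v + Fint N v := by
  have := Fint_expand hN hEv u v 1
  simpa using this

section Xsum

variable (n : ℕ) (N : Matrix (Fin (n+1)) (Fin (n+1)) ℤ)

/-- integer coordinates of a `Fin`-vector -/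
def iv {q : ℕ} (x : Fin (n+1) → Fin q) : Fin (n+1) → ℤ := fun i => ((x i : ℕ) : ℤ)

lemma Xsum_bound (hNsym : N.IsSymm) (hNeven : ∀ i, Even (N i i)) (hNdet : N.det ≠ 0)
    (q₂ L : ℕ) (hq₂ : 0 < q₂) (hL : 0 < L)
    (A : ℤ) (hA : IsCoprime ((q₂:ℤ)) A)
    (w : Fin (n+1) → ℤ) (hw : ∀ i, (L:ℤ) ∣ w i) :
    ‖∑ x : Fin (n+1) → Fin q₂,
        eZ (q₂*L) (A * L * Fint N (iv n x) + ∑ i, w i * (iv n x) i)‖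
      ≤ Real.sqrt (((q₂ * N.det.natAbs : ℕ) : ℝ) ^ (n+1)) := by
  classical
  haveI : NeZero q₂ := ⟨hq₂.ne'⟩
  set M := q₂ * L with hMdef
  have hM0 : M ≠ 0 := Nat.mul_ne_zero hq₂.ne' hL.ne'
  set E : (Fin (n+1) → ℤ) → ℤ :=
    fun u => A * L * Fint N u + ∑ i, w i * u i with hE
  set X : ℂ := ∑ x : Fin (n+1) → Fin q₂, eZ M (E (iv n x)) with hX
  -- invariance of eZ M ∘ E under mod-q₂ shifts
  have hEinv : ∀ u v : Fin (n+1) → ℤ, (∀ i, (q₂:ℤ) ∣ u i - v i) →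
      eZ M (E u) = eZ M (E v) := by
    intro u v hdv
    apply eZ_sub_dvd M hM0
    set d : Fin (n+1) → ℤ := fun i => (u i - v i) / q₂ with hd
    have hu : u = fun i => v i + (q₂:ℤ) * d i := by
      funext i
      have := Int.mul_ediv_cancel' (hdv i)
      simp only [hd]
      omega
    obtain ⟨z, hz⟩ : (L:ℤ) ∣ ∑ i, w i * d i :=
      Finset.dvd_sum fun i _ => Dvd.dvd.mul_right (hw i) _
    refine ⟨A * (Bf N v d + (q₂:ℤ) * Fint N d) + z, ?_⟩
    rw [hu]
    simp only [hE]
    rw [Fint_expand hNsym hNeven v d (q₂:ℤ)]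
    have hsum : ∑ i, w i * (v i + (q₂:ℤ) * d i)
        = ∑ i, w i * v i + (q₂:ℤ) * ∑ i, w i * d i := by
      rw [Finset.mul_sum, ← Finset.sum_add_distrib]
      exact Finset.sum_congr rfl fun i _ => by ring
    rw [hsum, hz, hMdef]
    push_cast
    ring
  -- the squared modulus
  have habs2 : ‖X‖ ^ 2 = ‖X * (starRingEnd ℂ) X‖ := by
    rw [norm_mul, Complex.norm_conj]
    ring
  -- expand the square
  have hXc : (starRingEnd ℂ) X = ∑ x : Fin (n+1) → Fin q₂, eZ M (-(E (iv n x))) := by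
    rw [hX, _root_.map_sum]
    exact Finset.sum_congr rfl fun x _ => eZ_conj M _
  have hprod : X * (starRingEnd ℂ) X
      = ∑ h : Fin (n+1) → Fin q₂, eZ M (A * L * Fint N (iv n h) + ∑ i, w i * (iv n h) i)
          * ∑ x : Fin (n+1) → Fin q₂, eZ M (A * L * Bf N (iv n x) (iv n h)) := by
    rw [hXc, hX, Finset.sum_mul_sum]
    -- now ∑ z ∑ x eZ(E z) eZ(-E x) ; reindex z = x + h
    rw [Finset.sum_comm]
    -- ∑ x ∑ z
    have hinner : ∀ x : Fin (n+1) → Fin q₂,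
        (∑ z : Fin (n+1) → Fin q₂, eZ M (E (iv n z)) * eZ M (-(E (iv n x))))
        = ∑ h : Fin (n+1) → Fin q₂,
            eZ M (A * L * Fint N (iv n h) + ∑ i, w i * (iv n h) i)
              * eZ M (A * L * Bf N (iv n x) (iv n h)) := by
      intro x
      rw [← Equiv.sum_comp (Equiv.addLeft x) (fun z => eZ M (E (iv n z)) * eZ M (-(E (iv n x))))]
      refine Finset.sum_congr rfl fun h _ => ?_
      have hcoord : ∀ i, (q₂:ℤ) ∣ (iv n (Equiv.addLeft x h) i) - ((iv n x) i + (iv n h) i) := by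
        intro i
        have hval : ((x i + h i : Fin q₂) : ℕ) = ((x i : ℕ) + (h i : ℕ)) % q₂ := Fin.val_add _ _
        simp only [iv, Equiv.coe_addLeft, Pi.add_apply, hval]
        have : (((((x i : ℕ) + (h i : ℕ)) % q₂ : ℕ)) : ℤ)
            = (((x i : ℕ) + (h i : ℕ) : ℕ) : ℤ) % (q₂ : ℤ) := by push_cast; rfl
        rw [this]
        refine ⟨-((((x i : ℕ) + (h i : ℕ) : ℕ) : ℤ) / (q₂:ℤ)), ?_⟩
        rw [Int.emod_def]
        push_cast
        ring
      have h1 : eZ M (E (iv n (Equiv.addLeft x h))) = eZ M (E (fun i => (iv n x) i + (iv n h) i)) :=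
        hEinv _ _ hcoord
      rw [h1, ← eZ_add]
      have h2 : E (fun i => (iv n x) i + (iv n h) i) + -(E (iv n x))
          = (A * L * Fint N (iv n h) + ∑ i, w i * (iv n h) i)
            + A * L * Bf N (iv n x) (iv n h) := by
        simp only [hE]
        rw [Fint_add hNsym hNeven]
        have hsum : ∑ i, w i * ((iv n x) i + (iv n h) i)
            = ∑ i, w i * (iv n x) i + ∑ i, w i * (iv n h) i := by
          rw [← Finset.sum_add_distrib]
          exact Finset.sum_congr rfl fun i _ => by ring
        rw [hsum]
        ring
      rw [h2, eZ_add]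
    rw [Finset.sum_congr rfl fun x _ => hinner x]
    rw [Finset.sum_comm]
    exact Finset.sum_congr rfl fun h _ => (Finset.mul_sum _ _ _).symm
  -- factor the inner x-sum as a product of one-dimensional sums
  set μ : (Fin (n+1) → Fin q₂) → Fin (n+1) → ℤ := fun h => N.mulVec (iv n h) with hμdef
  have hfact : ∀ h : Fin (n+1) → Fin q₂,
      (∑ x : Fin (n+1) → Fin q₂, eZ M (A * L * Bf N (iv n x) (iv n h)))
        = ∏ i, (if (q₂:ℤ) ∣ A * μ h i then (q₂:ℂ) else 0) := by
    intro h
    have hBf : ∀ x : Fin (n+1) → Fin q₂, A * L * Bf N (iv n x) (iv n h)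
        = ∑ i, (L:ℤ) * ((A * μ h i) * (iv n x) i) := by
      intro x
      rw [Bf_eq_mulVec, Finset.mul_sum]
      exact Finset.sum_congr rfl fun i _ => by simp only [hμdef]; ring
    calc (∑ x : Fin (n+1) → Fin q₂, eZ M (A * L * Bf N (iv n x) (iv n h)))
        = ∑ x : Fin (n+1) → Fin q₂, ∏ i, eZ M ((L:ℤ) * ((A * μ h i) * (iv n x) i)) := by
          refine Finset.sum_congr rfl fun x _ => ?_
          rw [hBf x, eZ_sum]
      _ = ∏ i, ∑ v : Fin q₂, eZ M ((L:ℤ) * ((A * μ h i) * ((v:ℕ):ℤ))) :=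
          (Fintype.prod_sum fun i (v : Fin q₂) =>
            eZ M ((L:ℤ) * ((A * μ h i) * ((v:ℕ):ℤ)))).symm
      _ = ∏ i, (if (q₂:ℤ) ∣ A * μ h i then (q₂:ℂ) else 0) := by
          refine Finset.prod_congr rfl fun i _ => ?_
          have hscale : ∀ v : Fin q₂, eZ M ((L:ℤ) * ((A * μ h i) * ((v:ℕ):ℤ)))
              = eZ q₂ ((A * μ h i) * ((v:ℕ):ℤ)) := fun v =>
            eZ_scale q₂ L hq₂.ne' hL.ne' _
          rw [Finset.sum_congr rfl fun v _ => hscale v,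
            Fin.sum_univ_eq_sum_range (fun vn => eZ q₂ ((A * μ h i) * (vn:ℤ))) q₂]
          exact eZ_ortho q₂ hq₂ (A * μ h i)
  -- counting
  set Dn := N.det.natAbs with hDn
  have hDnpos : 0 < Dn := Int.natAbs_pos.mpr hNdet
  set P : (Fin (n+1) → Fin q₂) → Prop := fun h => ∀ i, (q₂:ℤ) ∣ A * μ h i with hP
  have hprodite : ∀ h, ‖∏ i, (if (q₂:ℤ) ∣ A * μ h i then (q₂:ℂ) else 0)‖
      = if P h then (q₂:ℝ)^(n+1) else 0 := by
    intro h
    rw [norm_prod]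
    by_cases hp : P h
    · rw [if_pos hp]
      have : ∀ i, ‖if (q₂:ℤ) ∣ A * μ h i then (q₂:ℂ) else 0‖ = (q₂:ℝ) := by
        intro i
        rw [if_pos (hp i)]
        simp
      rw [Finset.prod_congr rfl fun i _ => this i, Finset.prod_const]
      simp [Finset.card_univ]
    · rw [if_neg hp]
      have hp' : ∃ i0, ¬ (q₂:ℤ) ∣ A * μ h i0 := by
        by_contra hc
        push_neg at hc
        exact hp fun i => hc i
      obtain ⟨i0, hi0⟩ := hp'
      refine Finset.prod_eq_zero (Finset.mem_univ i0) ?_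
      rw [if_neg hi0]
      simp
  have hcount : ((Finset.univ : Finset (Fin (n+1) → Fin q₂)).filter P).card ≤ Dn^(n+1) := by
    set bad : Finset (Fin q₂) :=
      Finset.univ.filter (fun v => (q₂:ℤ) ∣ (Dn:ℤ) * ((v : ℕ) : ℤ)) with hbad
    have hbadcard : bad.card ≤ Dn := by
      refine le_trans (Finset.card_le_card_of_injOn (fun v => (v : ℕ)) ?_ ?_)
        (count_dvd_mul q₂ Dn hq₂ hDnpos)
      · intro v hv
        exact Finset.mem_filter.mpr
          ⟨Finset.mem_range.mpr v.isLt, (Finset.mem_filter.mp hv).2⟩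
      · intro v _ v' _ hvv
        have hv2 : (v : ℕ) = (v' : ℕ) := hvv
        exact Fin.val_injective hv2
    have hsubset : (Finset.univ : Finset (Fin (n+1) → Fin q₂)).filter P
        ⊆ Fintype.piFinset (fun _ : Fin (n+1) => bad) := by
      intro h hh
      rw [Fintype.mem_piFinset]
      intro i
      rw [hbad, Finset.mem_filter]
      refine ⟨Finset.mem_univ _, ?_⟩
      have hPh : P h := (Finset.mem_filter.mp hh).2
      have hμdvd : ∀ j, (q₂:ℤ) ∣ μ h j := fun j => hA.dvd_of_dvd_mul_left (hPh j)
      have hdet := dvd_det_mul N (iv n h) (q₂:ℤ) hμdvd i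
      rcases Int.natAbs_eq N.det with he | he
      · rw [he] at hdet
        exact hdet
      · rw [he] at hdet
        rw [neg_mul] at hdet
        exact (dvd_neg.mp hdet)
    calc ((Finset.univ : Finset (Fin (n+1) → Fin q₂)).filter P).card
        ≤ (Fintype.piFinset (fun _ : Fin (n+1) => bad)).card := Finset.card_le_card hsubset
      _ = ∏ _i : Fin (n+1), bad.card := Fintype.card_piFinset _
      _ ≤ ∏ _i : Fin (n+1), Dn := Finset.prod_le_prod (fun _ _ => Nat.zero_le _)
            (fun _ _ => hbadcard)
      _ = Dn^(n+1) := by rw [Finset.prod_const, Finset.card_univ, Fintype.card_fin]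
  -- put it together
  have habs_le : ‖X‖ ^ 2 ≤ (((q₂ * Dn : ℕ)):ℝ) ^ (n+1) := by
    rw [habs2, hprod]
    calc ‖∑ h : Fin (n+1) → Fin q₂,
          eZ M (A * L * Fint N (iv n h) + ∑ i, w i * (iv n h) i)
            * ∑ x : Fin (n+1) → Fin q₂, eZ M (A * L * Bf N (iv n x) (iv n h))‖
        ≤ ∑ h : Fin (n+1) → Fin q₂, ‖
            eZ M (A * L * Fint N (iv n h) + ∑ i, w i * (iv n h) i)
            * ∑ x : Fin (n+1) → Fin q₂, eZ M (A * L * Bf N (iv n x) (iv n h))‖ :=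
          norm_sum_le _ _
      _ = ∑ h : Fin (n+1) → Fin q₂, (if P h then (q₂:ℝ)^(n+1) else 0) := by
          refine Finset.sum_congr rfl fun h _ => ?_
          rw [norm_mul, abs_eZ, one_mul, hfact h, hprodite h]
      _ = ((Finset.univ : Finset (Fin (n+1) → Fin q₂)).filter P).card * (q₂:ℝ)^(n+1) := by
          rw [← Finset.sum_filter, Finset.sum_const, nsmul_eq_mul]
      _ ≤ (Dn^(n+1) : ℕ) * (q₂:ℝ)^(n+1) := by
          have h1 : (((Finset.univ : Finset (Fin (n+1) → Fin q₂)).filter P).card : ℝ)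
              ≤ ((Dn^(n+1) : ℕ) : ℝ) := by exact_mod_cast hcount
          have h2 : (0:ℝ) ≤ (q₂:ℝ)^(n+1) := by positivity
          exact mul_le_mul_of_nonneg_right h1 h2
      _ = (((q₂ * Dn : ℕ)):ℝ) ^ (n+1) := by push_cast; ring
  have hXnonneg : 0 ≤ ‖X‖ := norm_nonneg X
  calc ‖X‖ = Real.sqrt ((‖X‖)^2) := (Real.sqrt_sq hXnonneg).symm
    _ ≤ Real.sqrt ((((q₂ * Dn : ℕ)):ℝ) ^ (n+1)) := Real.sqrt_le_sqrt habs_le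
    _ = Real.sqrt (((q₂ * N.det.natAbs : ℕ) : ℝ) ^ (n+1)) := by rw [hDn]

end Xsum

lemma sum_mul_split {m : ℕ} (g X Y : Fin m → ℤ) (k : ℤ) :
    ∑ i, g i * (X i + k * Y i) = ∑ i, g i * X i + k * ∑ i, g i * Y i := by
  rw [Finset.mul_sum, ← Finset.sum_add_distrib]
  exact Finset.sum_congr rfl fun i _ => by ring

lemma sum_w_split {m : ℕ} (G c X : Fin m → ℤ) (α : ℤ) :
    ∑ i, (α * G i + c i) * X i = α * ∑ i, G i * X i + ∑ i, c i * X i := by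
  rw [Finset.mul_sum, ← Finset.sum_add_distrib]
  exact Finset.sum_congr rfl fun i _ => by ring

lemma sum_mul_assoc_split {m : ℕ} (g X Y : Fin m → ℤ) (q k : ℤ) :
    ∑ i, g i * (q * (X i + k * Y i))
      = q * ∑ i, g i * X i + q * k * ∑ i, g i * Y i := by
  rw [Finset.mul_sum, Finset.mul_sum, ← Finset.sum_add_distrib]
  exact Finset.sum_congr rfl fun i _ => by ring

def splitEquiv (n q₂ L : ℕ) (hq₂ : 0 < q₂) (hL : 0 < L) :
    ((Fin (n+1) → Fin q₂) × (Fin (n+1) → Fin L)) ≃ (Fin (n+1) → Fin (q₂*L)) where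
  toFun p i := ⟨(p.1 i : ℕ) + q₂ * (p.2 i : ℕ), by
    have hx := (p.1 i).isLt
    have hy := (p.2 i).isLt
    have h1 : (p.1 i : ℕ) + q₂ * (p.2 i : ℕ) < q₂ * ((p.2 i : ℕ) + 1) := by
      rw [Nat.mul_add, Nat.mul_one]
      omega
    have h2 : q₂ * ((p.2 i : ℕ) + 1) ≤ q₂ * L := Nat.mul_le_mul_left q₂ hy
    exact lt_of_lt_of_le h1 h2⟩
  invFun σ := (fun i => ⟨(σ i : ℕ) % q₂, Nat.mod_lt _ hq₂⟩,
               fun i => ⟨(σ i : ℕ) / q₂, Nat.div_lt_of_lt_mul (σ i).isLt⟩)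
  left_inv p := by
    ext i
    · show ((p.1 i : ℕ) + q₂ * (p.2 i : ℕ)) % q₂ = (p.1 i : ℕ)
      rw [Nat.add_mul_mod_self_left, Nat.mod_eq_of_lt (p.1 i).isLt]
    · show ((p.1 i : ℕ) + q₂ * (p.2 i : ℕ)) / q₂ = (p.2 i : ℕ)
      rw [Nat.add_mul_div_left _ _ hq₂, Nat.div_eq_of_lt (p.1 i).isLt, Nat.zero_add]
  right_inv σ := by
    funext i
    apply Fin.ext
    show (σ i : ℕ) % q₂ + q₂ * ((σ i : ℕ) / q₂) = (σ i : ℕ)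
    exact Nat.mod_add_div _ _

section UaB

variable (n : ℕ) (N : Matrix (Fin (n+1)) (Fin (n+1)) ℤ)

/-- the linear coefficient vector `w_{a,b}` -/
def wvec (q₁ q₂ : ℕ) (lam c : Fin (n+1) → ℤ) (a b : ℕ) : Fin (n+1) → ℤ :=
  fun i => (((a:ℤ) + (q₂:ℤ) * (b:ℤ)) * (q₁:ℤ)) * grad N lam i + c i

lemma Ua_bound (hNsym : N.IsSymm) (hNeven : ∀ i, Even (N i i)) (hNdet : N.det ≠ 0)
    (q₁ q₂ L : ℕ) (hq₁ : 0 < q₁) (hq₂ : 0 < q₂) (hL : 0 < L)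
    (lam c : Fin (n+1) → ℤ) (k₂ : ℤ) (a : ℕ)
    (hacop : IsCoprime ((q₂:ℤ)) ((a:ℤ) * (q₁:ℤ)^2)) :
    (L:ℝ) * ‖∑ σ ∈ (Finset.univ : Finset (Fin (n+1) → Fin (q₂*L))).filter
        (fun σ => (L:ℤ) ∣ Hpoly N L lam (fun i => (q₁:ℤ) * ((σ i : ℕ) : ℤ))),
        eZ (q₂*L) ((a : ℤ) * ((q₁ : ℤ)^2 * (L:ℤ) * Fint N (fun i => ((σ i : ℕ) : ℤ))
            + (q₁:ℤ) * ((∑ i, grad N lam i * ((σ i : ℕ) : ℤ)) + k₂))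
          + ∑ i, c i * ((σ i : ℕ) : ℤ))‖
      ≤ (L:ℝ)^(n+1) * Real.sqrt (((q₂ * N.det.natAbs : ℕ) : ℝ) ^ (n+1))
          * (((Finset.range L).filter
              (fun b => ∀ i, (L:ℤ) ∣ wvec n N q₁ q₂ lam c a b i)).card : ℝ) := by
  classical
  set M := q₂ * L with hM
  have hM0 : M ≠ 0 := Nat.mul_ne_zero hq₂.ne' hL.ne'
  set W : (Fin (n+1) → Fin M) → ℤ := fun σ =>
    (a : ℤ) * ((q₁ : ℤ)^2 * (L:ℤ) * Fint N (fun i => ((σ i : ℕ) : ℤ))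
      + (q₁:ℤ) * ((∑ i, grad N lam i * ((σ i : ℕ) : ℤ)) + k₂))
      + ∑ i, c i * ((σ i : ℕ) : ℤ) with hW
  set H : (Fin (n+1) → Fin M) → ℤ :=
    fun σ => Hpoly N L lam (fun i => (q₁:ℤ) * ((σ i : ℕ) : ℤ)) with hH
  set w : ℕ → Fin (n+1) → ℤ := fun b => wvec n N q₁ q₂ lam c a b with hwdef
  set BX : ℝ := Real.sqrt (((q₂ * N.det.natAbs : ℕ) : ℝ) ^ (n+1)) with hBX
  have hBXnn : 0 ≤ BX := Real.sqrt_nonneg _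
  -- Step 1: completion of the L-condition
  have hUa : (L:ℂ) * (∑ σ ∈ Finset.univ.filter (fun σ => (L:ℤ) ∣ H σ), eZ M (W σ))
      = ∑ b ∈ Finset.range L, ∑ σ : Fin (n+1) → Fin M,
          eZ M (W σ + (q₂:ℤ) * (H σ * b)) := by
    have h1 : ∀ σ : Fin (n+1) → Fin M,
        (∑ b ∈ Finset.range L, eZ M ((q₂:ℤ) * (H σ * b)))
          = if (L:ℤ) ∣ H σ then (L:ℂ) else 0 := by
      intro σ
      have hsc : ∀ b : ℕ, eZ M ((q₂:ℤ) * (H σ * (b:ℤ))) = eZ L (H σ * b) := by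
        intro b
        rw [hM, Nat.mul_comm q₂ L]
        exact eZ_scale L q₂ hL.ne' hq₂.ne' _
      rw [Finset.sum_congr rfl fun b _ => hsc b]
      exact eZ_ortho L hL (H σ)
    calc (L:ℂ) * (∑ σ ∈ Finset.univ.filter (fun σ => (L:ℤ) ∣ H σ), eZ M (W σ))
        = ∑ σ ∈ Finset.univ.filter (fun σ => (L:ℤ) ∣ H σ), eZ M (W σ) * (L:ℂ) := by
          rw [Finset.mul_sum]
          exact Finset.sum_congr rfl fun σ _ => mul_comm _ _
      _ = ∑ σ : Fin (n+1) → Fin M, eZ M (W σ) * (if (L:ℤ) ∣ H σ then (L:ℂ) else 0) := by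
          rw [Finset.sum_filter]
          refine Finset.sum_congr rfl fun σ _ => ?_
          rw [mul_ite, mul_zero]
      _ = ∑ σ : Fin (n+1) → Fin M, ∑ b ∈ Finset.range L, eZ M (W σ + (q₂:ℤ) * (H σ * b)) := by
          refine Finset.sum_congr rfl fun σ _ => ?_
          rw [← h1 σ, Finset.mul_sum]
          exact Finset.sum_congr rfl fun b _ => (eZ_add M _ _).symm
      _ = ∑ b ∈ Finset.range L, ∑ σ : Fin (n+1) → Fin M, eZ M (W σ + (q₂:ℤ) * (H σ * b)) :=
          Finset.sum_comm
  -- Step 2: evaluate the complete sum for each b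
  set e := splitEquiv n q₂ L hq₂ hL with he
  have hbterm : ∀ b : ℕ,
      (∑ σ : Fin (n+1) → Fin M, eZ M (W σ + (q₂:ℤ) * (H σ * b)))
        = eZ M ((a:ℤ) * (q₁:ℤ) * k₂ + (q₂:ℤ) * (b:ℤ) * (Fint N lam / (L:ℤ)))
          * ((∑ x : Fin (n+1) → Fin q₂, eZ M (((a:ℤ) * (q₁:ℤ)^2) * (L:ℤ) * Fint N (iv n x)
              + ∑ i, w b i * iv n x i))
            * ∏ i, (if (L:ℤ) ∣ w b i then (L:ℂ) else 0)) := by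
    intro b
    have hterm : ∀ p : (Fin (n+1) → Fin q₂) × (Fin (n+1) → Fin L),
        eZ M (W (e p) + (q₂:ℤ) * (H (e p) * b))
          = eZ M ((a:ℤ) * (q₁:ℤ) * k₂ + (q₂:ℤ) * (b:ℤ) * (Fint N lam / (L:ℤ)))
            * (eZ M (((a:ℤ) * (q₁:ℤ)^2) * (L:ℤ) * Fint N (iv n p.1)
                + ∑ i, w b i * iv n p.1 i)
              * eZ M ((q₂:ℤ) * ∑ i, w b i * iv n p.2 i)) := by
      intro p
      rw [← eZ_add, ← eZ_add]
      apply eZ_sub_dvd M hM0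
      have hval : ∀ i, (((e p) i : ℕ) : ℤ) = iv n p.1 i + (q₂:ℤ) * iv n p.2 i := by
        intro i
        show (((p.1 i : ℕ) + q₂ * (p.2 i : ℕ) : ℕ) : ℤ) = _
        simp only [iv]
        push_cast
        ring
      simp only [hW, hH, Hpoly, hwdef, wvec, hval]
      rw [Fint_expand hNsym hNeven (iv n p.1) (iv n p.2) (q₂:ℤ)]
      rw [sum_mul_split (grad N lam) (iv n p.1) (iv n p.2) (q₂:ℤ),
          sum_mul_split c (iv n p.1) (iv n p.2) (q₂:ℤ),
          sum_mul_assoc_split (grad N lam) (iv n p.1) (iv n p.2) (q₁:ℤ) (q₂:ℤ),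
          sum_w_split (grad N lam) c (iv n p.1) (((a:ℤ) + (q₂:ℤ) * (b:ℤ)) * (q₁:ℤ)),
          sum_w_split (grad N lam) c (iv n p.2) (((a:ℤ) + (q₂:ℤ) * (b:ℤ)) * (q₁:ℤ))]
      refine ⟨(a:ℤ) * (q₁:ℤ)^2 * (Bf N (iv n p.1) (iv n p.2) + (q₂:ℤ) * Fint N (iv n p.2)), ?_⟩
      rw [hM]
      push_cast
      ring
    have hysum : (∑ y : Fin (n+1) → Fin L, eZ M ((q₂:ℤ) * ∑ i, w b i * iv n y i))
        = ∏ i, (if (L:ℤ) ∣ w b i then (L:ℂ) else 0) := by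
      calc (∑ y : Fin (n+1) → Fin L, eZ M ((q₂:ℤ) * ∑ i, w b i * iv n y i))
          = ∑ y : Fin (n+1) → Fin L, ∏ i, eZ M ((q₂:ℤ) * (w b i * iv n y i)) := by
            refine Finset.sum_congr rfl fun y _ => ?_
            rw [Finset.mul_sum, eZ_sum]
        _ = ∏ i, ∑ v : Fin L, eZ M ((q₂:ℤ) * (w b i * ((v:ℕ):ℤ))) :=
            (Fintype.prod_sum fun i (v : Fin L) => eZ M ((q₂:ℤ) * (w b i * ((v:ℕ):ℤ)))).symm
        _ = ∏ i, (if (L:ℤ) ∣ w b i then (L:ℂ) else 0) := by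
            refine Finset.prod_congr rfl fun i _ => ?_
            have hsc : ∀ v : Fin L, eZ M ((q₂:ℤ) * (w b i * ((v:ℕ):ℤ)))
                = eZ L (w b i * ((v:ℕ):ℤ)) := by
              intro v
              rw [hM, Nat.mul_comm q₂ L]
              exact eZ_scale L q₂ hL.ne' hq₂.ne' _
            rw [Finset.sum_congr rfl fun v _ => hsc v,
              Fin.sum_univ_eq_sum_range (fun vn => eZ L (w b i * (vn:ℤ))) L]
            exact eZ_ortho L hL (w b i)
    calc (∑ σ : Fin (n+1) → Fin M, eZ M (W σ + (q₂:ℤ) * (H σ * b)))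
        = ∑ p : (Fin (n+1) → Fin q₂) × (Fin (n+1) → Fin L),
            eZ M (W (e p) + (q₂:ℤ) * (H (e p) * b)) :=
          (Equiv.sum_comp e (fun σ => eZ M (W σ + (q₂:ℤ) * (H σ * b)))).symm
      _ = ∑ p : (Fin (n+1) → Fin q₂) × (Fin (n+1) → Fin L),
            eZ M ((a:ℤ) * (q₁:ℤ) * k₂ + (q₂:ℤ) * (b:ℤ) * (Fint N lam / (L:ℤ)))
            * (eZ M (((a:ℤ) * (q₁:ℤ)^2) * (L:ℤ) * Fint N (iv n p.1)
                + ∑ i, w b i * iv n p.1 i)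
              * eZ M ((q₂:ℤ) * ∑ i, w b i * iv n p.2 i)) :=
          Finset.sum_congr rfl fun p _ => hterm p
      _ = eZ M ((a:ℤ) * (q₁:ℤ) * k₂ + (q₂:ℤ) * (b:ℤ) * (Fint N lam / (L:ℤ)))
          * ((∑ x : Fin (n+1) → Fin q₂, eZ M (((a:ℤ) * (q₁:ℤ)^2) * (L:ℤ) * Fint N (iv n x)
              + ∑ i, w b i * iv n x i))
            * ∑ y : Fin (n+1) → Fin L, eZ M ((q₂:ℤ) * ∑ i, w b i * iv n y i)) := by
          rw [Fintype.sum_prod_type]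
          calc ∑ x : Fin (n+1) → Fin q₂, ∑ y : Fin (n+1) → Fin L,
                eZ M ((a:ℤ) * (q₁:ℤ) * k₂ + (q₂:ℤ) * (b:ℤ) * (Fint N lam / (L:ℤ)))
                * (eZ M (((a:ℤ) * (q₁:ℤ)^2) * (L:ℤ) * Fint N (iv n x)
                    + ∑ i, w b i * iv n x i)
                  * eZ M ((q₂:ℤ) * ∑ i, w b i * iv n y i))
              = ∑ x : Fin (n+1) → Fin q₂,
                  eZ M ((a:ℤ) * (q₁:ℤ) * k₂ + (q₂:ℤ) * (b:ℤ) * (Fint N lam / (L:ℤ)))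
                  * (eZ M (((a:ℤ) * (q₁:ℤ)^2) * (L:ℤ) * Fint N (iv n x)
                      + ∑ i, w b i * iv n x i)
                    * ∑ y : Fin (n+1) → Fin L, eZ M ((q₂:ℤ) * ∑ i, w b i * iv n y i)) := by
                refine Finset.sum_congr rfl fun x _ => ?_
                rw [← Finset.mul_sum, ← Finset.mul_sum]
            _ = _ := by
                rw [← Finset.mul_sum, ← Finset.sum_mul]
      _ = _ := by rw [hysum]
  -- Step 3: take absolute values
  have habs1 : (L:ℝ) * ‖∑ σ ∈ Finset.univ.filter (fun σ => (L:ℤ) ∣ H σ), eZ M (W σ)‖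
      ≤ ∑ b ∈ Finset.range L, ‖∑ σ : Fin (n+1) → Fin M,
          eZ M (W σ + (q₂:ℤ) * (H σ * b))‖ := by
    have : (L:ℝ) * ‖∑ σ ∈ Finset.univ.filter (fun σ => (L:ℤ) ∣ H σ), eZ M (W σ)‖
        = ‖(L:ℂ) * ∑ σ ∈ Finset.univ.filter (fun σ => (L:ℤ) ∣ H σ), eZ M (W σ)‖ := by
      rw [norm_mul, Complex.norm_natCast]
    rw [this, hUa]
    exact norm_sum_le _ _
  have hbbound : ∀ b ∈ Finset.range L,
      ‖∑ σ : Fin (n+1) → Fin M, eZ M (W σ + (q₂:ℤ) * (H σ * b))‖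
        ≤ if (∀ i, (L:ℤ) ∣ w b i) then (L:ℝ)^(n+1) * BX else 0 := by
    intro b _
    rw [hbterm b, norm_mul, abs_eZ, one_mul, norm_mul]
    by_cases hcond : ∀ i, (L:ℤ) ∣ w b i
    · rw [if_pos hcond]
      have hXle : ‖∑ x : Fin (n+1) → Fin q₂,
          eZ M (((a:ℤ) * (q₁:ℤ)^2) * (L:ℤ) * Fint N (iv n x) + ∑ i, w b i * iv n x i)‖
          ≤ BX := by
        rw [hBX, hM]
        exact Xsum_bound n N hNsym hNeven hNdet q₂ L hq₂ hL ((a:ℤ) * (q₁:ℤ)^2) hacop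
          (w b) hcond
      have hPabs : ‖∏ i, (if (L:ℤ) ∣ w b i then (L:ℂ) else 0)‖ = (L:ℝ)^(n+1) := by
        rw [norm_prod]
        have : ∀ i : Fin (n+1), ‖if (L:ℤ) ∣ w b i then (L:ℂ) else 0‖ = (L:ℝ) := by
          intro i
          rw [if_pos (hcond i)]
          exact Complex.norm_natCast L
        rw [Finset.prod_congr rfl fun i _ => this i, Finset.prod_const, Finset.card_univ,
          Fintype.card_fin]
      rw [hPabs]
      calc ‖∑ x : Fin (n+1) → Fin q₂,
            eZ M (((a:ℤ) * (q₁:ℤ)^2) * (L:ℤ) * Fint N (iv n x) + ∑ i, w b i * iv n x i)‖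
            * (L:ℝ)^(n+1)
          ≤ BX * (L:ℝ)^(n+1) := mul_le_mul_of_nonneg_right hXle (by positivity)
        _ = (L:ℝ)^(n+1) * BX := mul_comm _ _
    · rw [if_neg hcond]
      push_neg at hcond
      obtain ⟨i0, hi0⟩ := hcond
      have : ‖∏ i, (if (L:ℤ) ∣ w b i then (L:ℂ) else 0)‖ = 0 := by
        rw [norm_prod]
        refine Finset.prod_eq_zero (Finset.mem_univ i0) ?_
        rw [if_neg hi0]
        simp
      rw [this, mul_zero]
  calc (L:ℝ) * ‖∑ σ ∈ Finset.univ.filter (fun σ => (L:ℤ) ∣ H σ), eZ M (W σ)‖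
      ≤ ∑ b ∈ Finset.range L, ‖∑ σ : Fin (n+1) → Fin M,
          eZ M (W σ + (q₂:ℤ) * (H σ * b))‖ := habs1
    _ ≤ ∑ b ∈ Finset.range L, (if (∀ i, (L:ℤ) ∣ w b i) then (L:ℝ)^(n+1) * BX else 0) :=
        Finset.sum_le_sum hbbound
    _ = ∑ b ∈ (Finset.range L).filter (fun b => ∀ i, (L:ℤ) ∣ w b i), (L:ℝ)^(n+1) * BX :=
        (Finset.sum_filter _ _).symm
    _ = (((Finset.range L).filter (fun b => ∀ i, (L:ℤ) ∣ w b i)).card : ℝ)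
          * ((L:ℝ)^(n+1) * BX) := by
        rw [Finset.sum_const, nsmul_eq_mul]
    _ = (L:ℝ)^(n+1) * BX * (((Finset.range L).filter
          (fun b => ∀ i, (L:ℤ) ∣ wvec n N q₁ q₂ lam c a b i)).card : ℝ) := by
        rw [hwdef]
        ring

end UaB


lemma Tcount (n : ℕ) (N : Matrix (Fin (n+1)) (Fin (n+1)) ℤ) (hNdet : N.det ≠ 0)
    (L q₁ q₂ : ℕ) (hL : 0 < L) (hq₂ : 0 < q₂)
    (lam c : Fin (n+1) → ℤ)
    (hlamgcd : Int.gcd (Finset.univ.gcd lam) (L:ℤ) = 1)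
    (hq₁L : IsCoprime ((L:ℤ)) ((q₁:ℤ))) :
    (((Finset.range (q₂*L)).filter
        (fun t : ℕ => ∀ i, (L:ℤ) ∣ ((t:ℤ) * (q₁:ℤ)) * grad N lam i + c i)).card)
      ≤ q₂ * N.det.natAbs := by
  classical
  set Dn := N.det.natAbs with hDn
  have hDnpos : 0 < Dn := Int.natAbs_pos.mpr hNdet
  set g₀ := Nat.gcd L Dn with hg₀
  have hg₀pos : 0 < g₀ := Nat.gcd_pos_of_pos_left _ hL
  set m' := L / g₀ with hm'
  have hm'g : m' * g₀ = L := Nat.div_mul_cancel (Nat.gcd_dvd_left _ _)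
  have hm'pos : 0 < m' := by
    rcases Nat.eq_zero_or_pos m' with h0 | h0
    · rw [h0, zero_mul] at hm'g; omega
    · exact h0
  set Tset := (Finset.range (q₂*L)).filter
      (fun t : ℕ => ∀ i, (L:ℤ) ∣ ((t:ℤ) * (q₁:ℤ)) * grad N lam i + c i) with hTset
  have hkey : ∀ t ∈ Tset, ∀ t' ∈ Tset, t % m' = t' % m' := by
    intro t ht t' ht'
    have hGdvd : ∀ i, (L:ℤ) ∣ (((t':ℤ) - (t:ℤ)) * (q₁:ℤ)) * grad N lam i := by
      intro i
      have h1 := (Finset.mem_filter.mp ht).2 i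
      have h2 := (Finset.mem_filter.mp ht').2 i
      have h3 := dvd_sub h2 h1
      have heq : ((t':ℤ) * (q₁:ℤ)) * grad N lam i + c i
          - (((t:ℤ) * (q₁:ℤ)) * grad N lam i + c i)
          = (((t':ℤ) - (t:ℤ)) * (q₁:ℤ)) * grad N lam i := by ring
      rwa [heq] at h3
    set s : ℤ := ((t':ℤ) - (t:ℤ)) * (q₁:ℤ) with hs
    have hmv : ∀ i, (L:ℤ) ∣ N.mulVec (fun j => s * lam j) i := by
      intro i
      have heq : N.mulVec (fun j => s * lam j) i = s * grad N lam i := by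
        unfold Matrix.mulVec dotProduct grad
        rw [Finset.mul_sum]
        exact Finset.sum_congr rfl fun j _ => by ring
      rw [heq]
      exact hGdvd i
    have hdet : ∀ j, ∀ _ : j ∈ (Finset.univ : Finset (Fin (n+1))),
        (L:ℤ) ∣ (N.det * s) * lam j := by
      intro j _
      have h4 := dvd_det_mul N (fun j => s * lam j) (L:ℤ) hmv j
      rwa [show N.det * (s * lam j) = (N.det * s) * lam j by ring] at h4
    have hgcd : (L:ℤ) ∣ (N.det * s) * Finset.univ.gcd lam :=
      dvd_mul_finset_gcd Finset.univ lam (N.det * s) (L:ℤ) hdet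
    have hco1 : IsCoprime ((L:ℤ)) (Finset.univ.gcd lam) :=
      (Int.isCoprime_iff_gcd_eq_one.mpr hlamgcd).symm
    have hLs : (L:ℤ) ∣ N.det * s := hco1.dvd_of_dvd_mul_right hgcd
    have hLs2 : (L:ℤ) ∣ ((t':ℤ) - (t:ℤ)) * N.det := by
      have heq : N.det * s = (((t':ℤ) - (t:ℤ)) * N.det) * (q₁:ℤ) := by rw [hs]; ring
      rw [heq] at hLs
      exact hq₁L.dvd_of_dvd_mul_right hLs
    have hnat : L ∣ ((t':ℤ) - (t:ℤ)).natAbs * Dn := by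
      have h1 : ((L:ℤ)).natAbs ∣ (((t':ℤ) - (t:ℤ)) * N.det).natAbs :=
        Int.natAbs_dvd_natAbs.mpr hLs2
      rwa [Int.natAbs_mul, Int.natAbs_natCast] at h1
    have hm'dvd : m' ∣ ((t':ℤ) - (t:ℤ)).natAbs := by
      obtain ⟨k, hk⟩ := hnat
      have hco : Nat.Coprime (L / g₀) (Dn / g₀) := Nat.coprime_div_gcd_div_gcd hg₀pos
      have hdd : (L / g₀) ∣ (Dn / g₀) * ((t':ℤ) - (t:ℤ)).natAbs := by
        refine ⟨k, ?_⟩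
        have heq2 : (Dn / g₀) * ((t':ℤ) - (t:ℤ)).natAbs * g₀ = (L / g₀) * k * g₀ := by
          rw [mul_right_comm, Nat.div_mul_cancel (Nat.gcd_dvd_right L Dn), mul_right_comm,
            Nat.div_mul_cancel (Nat.gcd_dvd_left L Dn), ← hk, mul_comm]
        exact Nat.eq_of_mul_eq_mul_right hg₀pos heq2
      exact hco.dvd_of_dvd_mul_left hdd
    have hint : ((m':ℕ):ℤ) ∣ (t':ℤ) - (t:ℤ) := by
      rw [← Int.natAbs_dvd_natAbs, Int.natAbs_natCast]
      exact hm'dvd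
    exact (Nat.modEq_iff_dvd).mpr hint
  have hmess : Tset.card ≤ (Finset.range (q₂ * g₀)).card := by
    refine Finset.card_le_card_of_injOn (fun t => t / m') ?_ ?_
    · intro t ht
      have htq : t < q₂ * L := Finset.mem_range.mp (Finset.mem_filter.mp ht).1
      have hql : (q₂ * g₀) * m' = q₂ * L := by rw [← hm'g]; ring
      rw [Finset.mem_coe, Finset.mem_range, Nat.div_lt_iff_lt_mul hm'pos]
      omega
    · intro t ht t' ht' hdiv
      have e1 := Nat.div_add_mod t m'
      have e2 := Nat.div_add_mod t' m'
      have e3 := hkey t ht t' ht'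
      have e4 : t / m' = t' / m' := hdiv
      rw [← e1, ← e2, e3, e4]
  calc Tset.card ≤ (Finset.range (q₂ * g₀)).card := hmess
    _ = q₂ * g₀ := Finset.card_range _
    _ ≤ q₂ * Dn := Nat.mul_le_mul_left q₂ (Nat.le_of_dvd hDnpos (Nat.gcd_dvd_right L Dn))

/-- Proposition 4.6 (bound for the bad-modulus factor `S⁽²⁾`):
`|S⁽²⁾_{q,L,λ}(c)| ≪_F q₂^{(n+3)/2} Lⁿ gcd(q₂,L)^{1/2}`, uniformly in `q,c,L,λ`. -/
theorem S2_bound (n : ℕ) (hn : 2 ≤ n)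
    (N : Matrix (Fin (n+1)) (Fin (n+1)) ℤ) (hNsym : N.IsSymm)
    (hNeven : ∀ i, Even (N i i)) (hNdet : N.det ≠ 0) :
    ∃ C : ℝ, 0 < C ∧
      ∀ (L : ℕ), 0 < L →
      ∀ lam : Fin (n+1) → ℤ, (L : ℤ) ∣ Fint N lam →
        Int.gcd (Finset.univ.gcd lam) (L : ℤ) = 1 →
      ∀ (q₁ q₂ : ℕ), 0 < q₁ → 0 < q₂ →
        Int.gcd (q₁ : ℤ) (2 * L * N.det) = 1 →
        (∀ p : ℕ, p.Prime → p ∣ q₂ → (p : ℤ) ∣ 2 * L * N.det) →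
      ∀ k₂ : ℤ, ((q₂ : ℤ) * L) ∣ (Fint N lam / L - k₂ * q₁) →
      ∀ c : Fin (n+1) → ℤ,
        ‖S2 n N q₁ q₂ L k₂ lam c‖
          ≤ C * (q₂ : ℝ) ^ (((n : ℝ) + 3)/2) * (L : ℝ)^n
              * ((Nat.gcd q₂ L : ℝ)) ^ ((1 : ℝ)/2) := by
  classical
  have hDnpos : 0 < N.det.natAbs := Int.natAbs_pos.mpr hNdet
  set Dn := N.det.natAbs with hDn
  refine ⟨(Dn:ℝ) ^ (((n:ℝ)+3)/2),
    Real.rpow_pos_of_pos (by exact_mod_cast hDnpos) _, ?_⟩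
  intro L hL lam hFlam hlamgcd q₁ q₂ hq₁ hq₂ hq₁cop hq₂prime k₂ hk₂ c
  -- coprimality facts
  have hq₁L : IsCoprime ((L:ℤ)) ((q₁:ℤ)) := by
    have h1 : ((Int.gcd (q₁:ℤ) (L:ℤ) : ℕ) : ℤ) ∣ (q₁:ℤ) := Int.gcd_dvd_left _ _
    have h2 : ((Int.gcd (q₁:ℤ) (L:ℤ) : ℕ) : ℤ) ∣ 2 * (L:ℤ) * N.det := by
      have hx : ((Int.gcd (q₁:ℤ) (L:ℤ) : ℕ) : ℤ) ∣ (L:ℤ) := Int.gcd_dvd_right _ _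
      exact Dvd.dvd.trans hx ⟨2 * N.det, by ring⟩
    have h3 := Int.dvd_coe_gcd h1 h2
    rw [hq₁cop] at h3
    have h4 : Int.gcd (q₁:ℤ) (L:ℤ) = 1 := by
      have := Int.natCast_dvd_natCast.mp (by exact_mod_cast h3 : ((Int.gcd (q₁:ℤ) (L:ℤ) : ℕ) : ℤ) ∣ ((1:ℕ):ℤ))
      exact Nat.dvd_one.mp this
    exact (Int.isCoprime_iff_gcd_eq_one.mpr h4).symm
  have hq₁q₂ : Nat.Coprime q₁ q₂ := by
    by_contra hnc
    have hp := Nat.minFac_prime hnc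
    set p := (Nat.gcd q₁ q₂).minFac with hpdef
    have hp₁ : p ∣ q₁ := (Nat.minFac_dvd _).trans (Nat.gcd_dvd_left _ _)
    have hp₂ : p ∣ q₂ := (Nat.minFac_dvd _).trans (Nat.gcd_dvd_right _ _)
    have h2LD := hq₂prime p hp hp₂
    have h3 : ((p:ℕ):ℤ) ∣ ((Int.gcd (q₁:ℤ) (2 * (L:ℤ) * N.det) : ℕ):ℤ) :=
      Int.dvd_coe_gcd (Int.natCast_dvd_natCast.mpr hp₁) h2LD
    rw [hq₁cop] at h3
    have h4 : p ∣ 1 := by exact_mod_cast h3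
    exact Nat.Prime.ne_one hp (Nat.dvd_one.mp h4)
  have hcoA : ∀ a : ℕ, Nat.gcd a q₂ = 1 → IsCoprime ((q₂:ℤ)) ((a:ℤ) * (q₁:ℤ)^2) := by
    intro a ha
    have h1 : Nat.Coprime q₂ (a * q₁^2) :=
      Nat.Coprime.mul_right (Nat.coprime_comm.mp ha)
        (Nat.Coprime.pow_right 2 (Nat.coprime_comm.mp hq₁q₂))
    have h2 := Nat.isCoprime_iff_coprime.mpr h1
    have hcast : ((a * q₁^2 : ℕ) : ℤ) = (a:ℤ) * (q₁:ℤ)^2 := by push_cast; ring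
    rwa [hcast] at h2
  -- notation
  set BX : ℝ := Real.sqrt (((q₂ * Dn : ℕ) : ℝ) ^ (n+1)) with hBX
  have hBXnn : 0 ≤ BX := Real.sqrt_nonneg _
  set ν : ℕ → ℕ := fun a => (((Finset.range L).filter
      (fun b => ∀ i, (L:ℤ) ∣ wvec n N q₁ q₂ lam c a b i)).card) with hν
  have hLpos : (0:ℝ) < (L:ℝ) := by exact_mod_cast hL
  -- step 1 : triangle inequality over a
  have hfold : ∀ t : ℤ, eChar (q₂*L) ((t : ℤ) : ℝ) = eZ (q₂*L) t := fun _ => rfl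
  rw [S2, Finset.sum_comm]
  have htri : ‖∑ a ∈ (Finset.range q₂).filter (fun a => Nat.gcd a q₂ = 1),
        ∑ σ ∈ (Finset.univ : Finset (Fin (n+1) → Fin (q₂*L))).filter
          (fun σ => (L:ℤ) ∣ Hpoly N L lam (fun i => (q₁ : ℤ) * ((σ i : ℕ) : ℤ))),
          eChar (q₂*L)
            (((a : ℤ) * ((q₁ : ℤ)^2 * (L:ℤ) * Fint N (fun i => ((σ i : ℕ) : ℤ))
                + (q₁:ℤ) * ((∑ i, grad N lam i * ((σ i : ℕ) : ℤ)) + k₂))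
              + ∑ i, c i * ((σ i : ℕ) : ℤ) : ℤ) : ℝ)‖
      ≤ ∑ a ∈ (Finset.range q₂).filter (fun a => Nat.gcd a q₂ = 1),
          (L:ℝ)^n * BX * (ν a : ℝ) := by
    refine le_trans (norm_sum_le _ _) (Finset.sum_le_sum ?_)
    intro a ha
    have hub := Ua_bound n N hNsym hNeven hNdet q₁ q₂ L hq₁ hq₂ hL lam c k₂ a
      (hcoA a (Finset.mem_filter.mp ha).2)
    rw [hBX, hDn]
    have hmul : (L:ℝ) * ((L:ℝ)^n * Real.sqrt (((q₂ * N.det.natAbs : ℕ) : ℝ) ^ (n+1)) * (ν a : ℝ))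
        = (L:ℝ)^(n+1) * Real.sqrt (((q₂ * N.det.natAbs : ℕ) : ℝ) ^ (n+1)) * (ν a : ℝ) := by
      rw [pow_succ]
      ring
    refine le_of_mul_le_mul_left ?_ hLpos
    rw [hmul]
    exact hub
  refine le_trans htri ?_
  -- step 2 : sum the counts
  have hsumν : ∑ a ∈ (Finset.range q₂).filter (fun a => Nat.gcd a q₂ = 1), (ν a) ≤ q₂ * Dn := by
    have hTc := Tcount n N hNdet L q₁ q₂ hL hq₂ lam c hlamgcd hq₁L
    refine le_trans ?_ hTc
    calc ∑ a ∈ (Finset.range q₂).filter (fun a => Nat.gcd a q₂ = 1), ν a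
        ≤ ∑ a ∈ Finset.range q₂, ν a :=
          Finset.sum_le_sum_of_subset (Finset.filter_subset _ _)
      _ = ((Finset.range q₂ ×ˢ Finset.range L).filter
            (fun p => ∀ i, (L:ℤ) ∣ wvec n N q₁ q₂ lam c p.1 p.2 i)).card := by
          rw [Finset.card_filter, Finset.sum_product]
          exact Finset.sum_congr rfl fun a _ => by simp only [hν]; rw [Finset.card_filter]
      _ ≤ (((Finset.range (q₂*L)).filter
            (fun t : ℕ => ∀ i, (L:ℤ) ∣ ((t:ℤ) * (q₁:ℤ)) * grad N lam i + c i)).card) := by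
          refine Finset.card_le_card_of_injOn (fun p => p.1 + q₂ * p.2) ?_ ?_
          · intro p hp
            have h1 := (Finset.mem_filter.mp hp).1
            have hpa : p.1 < q₂ := Finset.mem_range.mp (Finset.mem_product.mp h1).1
            have hpb : p.2 < L := Finset.mem_range.mp (Finset.mem_product.mp h1).2
            rw [Finset.mem_coe, Finset.mem_filter]
            constructor
            · rw [Finset.mem_range]
              have h2 : p.1 + q₂ * p.2 < q₂ * (p.2 + 1) := by
                rw [Nat.mul_add, Nat.mul_one]; omega
              exact lt_of_lt_of_le h2 (Nat.mul_le_mul_left q₂ hpb)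
            · intro i
              have h3 := (Finset.mem_filter.mp hp).2 i
              have hcast : (((p.1 + q₂ * p.2 : ℕ):ℤ) * (q₁:ℤ)) * grad N lam i + c i
                  = wvec n N q₁ q₂ lam c p.1 p.2 i := by
                unfold wvec
                push_cast
                ring
              rw [hcast]
              exact h3
          · intro p hp p' hp' heq
            have h1 := (Finset.mem_filter.mp hp).1
            have h1' := (Finset.mem_filter.mp hp').1
            have hpa : p.1 < q₂ := Finset.mem_range.mp (Finset.mem_product.mp h1).1
            have hpa' : p'.1 < q₂ := Finset.mem_range.mp (Finset.mem_product.mp h1').1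
            have heq2 : p.1 + q₂ * p.2 = p'.1 + q₂ * p'.2 := heq
            have hmod : p.1 = p'.1 := by
              have hm1 : (p.1 + q₂ * p.2) % q₂ = p.1 := by
                rw [Nat.add_mul_mod_self_left, Nat.mod_eq_of_lt hpa]
              have hm2 : (p'.1 + q₂ * p'.2) % q₂ = p'.1 := by
                rw [Nat.add_mul_mod_self_left, Nat.mod_eq_of_lt hpa']
              rw [← hm1, ← hm2, heq2]
            have hb : p.2 = p'.2 := by
              have : q₂ * p.2 = q₂ * p'.2 := by omega
              exact Nat.eq_of_mul_eq_mul_left hq₂ this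
            exact Prod.ext hmod hb
  -- step 3 : numeric conclusion
  have hq₂Dnpos : (0:ℝ) < ((q₂ * Dn : ℕ) : ℝ) := by
    have : 0 < q₂ * Dn := Nat.mul_pos hq₂ hDnpos
    exact_mod_cast this
  have hBXval : BX = (((q₂ * Dn : ℕ)):ℝ) ^ ((((n:ℕ):ℝ)+1)/2) := by
    rw [hBX, Real.sqrt_eq_rpow, ← Real.rpow_natCast (((q₂ * Dn : ℕ)):ℝ) (n+1),
      ← Real.rpow_mul (le_of_lt hq₂Dnpos)]
    congr 1
    push_cast
    ring
  calc ∑ a ∈ (Finset.range q₂).filter (fun a => Nat.gcd a q₂ = 1), (L:ℝ)^n * BX * (ν a : ℝ)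
      = (L:ℝ)^n * BX * ∑ a ∈ (Finset.range q₂).filter (fun a => Nat.gcd a q₂ = 1), (ν a : ℝ) := by
        rw [Finset.mul_sum]
    _ ≤ (L:ℝ)^n * BX * ((q₂ * Dn : ℕ) : ℝ) := by
        refine mul_le_mul_of_nonneg_left ?_ (by positivity)
        rw [← Nat.cast_sum]
        exact_mod_cast hsumν
    _ = (L:ℝ)^n * (((q₂ * Dn : ℕ)):ℝ) ^ (((((n:ℕ):ℝ))+3)/2) := by
        rw [hBXval]
        have hx0 : (((q₂ * Dn : ℕ)):ℝ) ≠ 0 := ne_of_gt hq₂Dnpos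
        have : (((q₂ * Dn : ℕ)):ℝ) ^ ((((n:ℕ):ℝ)+1)/2) * (((q₂ * Dn : ℕ)):ℝ)
            = (((q₂ * Dn : ℕ)):ℝ) ^ (((((n:ℕ):ℝ))+3)/2) := by
          rw [show (((((n:ℕ):ℝ))+3)/2) = ((((n:ℕ):ℝ)+1)/2) + 1 by ring,
            Real.rpow_add_one hx0]
        rw [mul_assoc, this]
    _ = ((Dn:ℝ) ^ (((n:ℝ)+3)/2)) * (q₂:ℝ) ^ (((n:ℝ)+3)/2) * (L:ℝ)^n := by
        have hcast : (((q₂ * Dn : ℕ)):ℝ) = (q₂:ℝ) * (Dn:ℝ) := by push_cast; ring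
        rw [hcast, Real.mul_rpow (by positivity) (by positivity)]
        ring
    _ ≤ ((Dn:ℝ) ^ (((n:ℝ)+3)/2)) * (q₂:ℝ) ^ (((n:ℝ)+3)/2) * (L:ℝ)^n
          * ((Nat.gcd q₂ L : ℝ)) ^ ((1:ℝ)/2) := by
        have hg1 : (1:ℝ) ≤ ((Nat.gcd q₂ L : ℕ):ℝ) := by
          have := Nat.gcd_pos_of_pos_left L hq₂
          exact_mod_cast this
        have hg2 : (1:ℝ) ≤ ((Nat.gcd q₂ L : ℕ):ℝ) ^ ((1:ℝ)/2) :=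
          Real.one_le_rpow hg1 (by norm_num)
        have hnn : (0:ℝ) ≤ ((Dn:ℝ) ^ (((n:ℝ)+3)/2)) * (q₂:ℝ) ^ (((n:ℝ)+3)/2) * (L:ℝ)^n := by
          positivity
        exact le_mul_of_one_le_right hnn hg2

end Quad
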